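/- Let G be a k-regular k-connected simple graph with k ≥ 3 and |V(G)| ≥ 2(k−h)+3, where 0 ≤ h ≤ ⌊(k−1)/2⌋. Then the h-edge tolerable diagnosability of G under the MM* model equals k − h. -/

import Mathlib

open SimpleGraph Finset

variable {V : Type*}

/-- The vertex connectivity of a finite simple graph: the minimum size of a vertex set
whose removal leaves a graph that is disconnected or has at most one vertex. -/
noncomputable def vConn [Fintype V] (G : SimpleGraph V) : ℕ :=
  sInf {n | ∃ S : Finset V, S.card = n ∧
    (((↑S : Set V)ᶜ).Subsingleton ∨ ¬ (G.induce ((↑S : Set V)ᶜ)).Connected)}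


/-- Two fault sets are distinguishable under the MM* model (Sengupta–Dahbura). -/
def mmDistinguishable [DecidableEq V] (G : SimpleGraph V) (F1 F2 : Finset V) : Prop :=
  (∃ u w v : V, u ∉ F1 ∪ F2 ∧ w ∉ F1 ∪ F2 ∧ v ∈ (F1 \ F2) ∪ (F2 \ F1) ∧ G.Adj u v ∧ G.Adj u w) ∨
  (∃ u v w : V, u ∈ F1 \ F2 ∧ v ∈ F1 \ F2 ∧ u ≠ v ∧ w ∉ F1 ∪ F2 ∧ G.Adj u w ∧ G.Adj v w) ∨
  (∃ u v w : V, u ∈ F2 \ F1 ∧ v ∈ F2 \ F1 ∧ u ≠ v ∧ w ∉ F1 ∪ F2 ∧ G.Adj u w ∧ G.Adj v w)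

/-- A graph is $s$-diagnosable under the MM* model. -/
def mmDiagnosable [DecidableEq V] (G : SimpleGraph V) (s : ℕ) : Prop :=
  ∀ F1 F2 : Finset V, F1 ≠ F2 → F1.card ≤ s → F2.card ≤ s → mmDistinguishable G F1 F2

/-- The $h$-edge tolerable diagnosability under the MM* model. -/
noncomputable def mmTolDiag [Fintype V] [DecidableEq V] (G : SimpleGraph V) (h : ℕ) : ℕ :=
  sSup {s | ∀ Fe : Finset (Sym2 V), ↑Fe ⊆ G.edgeSet → Fe.card ≤ h →
    mmDiagnosable (G.deleteEdges ↑Fe) s}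

lemma sep_not_connected (G : SimpleGraph V) (s P : Set V) {p q : V}
    (hp : p ∈ s) (hq : q ∈ s) (hpP : p ∈ P) (hqP : q ∉ P)
    (hsep : ∀ x y : V, x ∈ s → y ∈ s → x ∈ P → G.Adj x y → y ∈ P) :
    ¬ (G.induce s).Connected := by
  intro hc
  have hr : (G.induce s).Reachable ⟨p, hp⟩ ⟨q, hq⟩ := hc.preconnected _ _
  have key : ∀ (a b : s), (G.induce s).Walk a b → (a : V) ∈ P → (b : V) ∈ P := by
    intro a b w
    induction w with
    | nil => exact fun h => h
    | cons h w ih =>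
        intro ha
        exact ih (hsep _ _ (Subtype.mem _) (Subtype.mem _) ha h)
  exact hqP (hr.elim fun w => key _ _ w hpP)

lemma sum_card_filter_comm {α β : Type*} (X : Finset α) (Y : Finset β)
    (r : α → β → Prop) [∀ x, DecidablePred (r x)] [∀ y, DecidablePred (fun x => r x y)] :
    ∑ x ∈ X, (Y.filter (fun y => r x y)).card = ∑ y ∈ Y, (X.filter (fun x => r x y)).card := by
  simp only [Finset.card_filter]
  exact Finset.sum_comm

lemma card_filter_mem_sym2_le_two {α : Type*} [DecidableEq α] (X : Finset α) (e : Sym2 α) :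
    (X.filter (fun v => v ∈ e)).card ≤ 2 := by
  induction e using Sym2.inductionOn with
  | hf x y =>
    have hsub : X.filter (fun v => v ∈ s(x, y)) ⊆ {x, y} := by
      intro v hv
      rcases Finset.mem_filter.mp hv with ⟨-, hv⟩
      rcases Sym2.mem_iff.mp hv with h | h <;> simp [h]
    exact (Finset.card_le_card hsub).trans ((Finset.card_insert_le _ _).trans (by simp))

lemma sum_card_filter_comm' {α β : Type*} (X : Finset α) (Y : Finset β)
    (r : α → β → Prop) [∀ x, DecidablePred (r x)] [∀ y, DecidablePred (fun x => r x y)] :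
    ∑ x ∈ X, (Y.filter (fun y => r x y)).card = ∑ y ∈ Y, (X.filter (fun x => r x y)).card := by
  simp only [Finset.card_filter]
  exact Finset.sum_comm

lemma card_filter_mem_sym2_le_two' {α : Type*} [DecidableEq α] (X : Finset α) (e : Sym2 α) :
    (X.filter (fun v => v ∈ e)).card ≤ 2 := by
  induction e using Sym2.inductionOn with
  | hf x y =>
    have hsub : X.filter (fun v => v ∈ s(x, y)) ⊆ {x, y} := by
      intro v hv
      rcases Finset.mem_filter.mp hv with ⟨-, hv⟩
      rcases Sym2.mem_iff.mp hv with h | h <;> simp [h]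
    exact (Finset.card_le_card hsub).trans ((Finset.card_insert_le _ _).trans (by simp))

/-- plain budget: `∑_{t∈X} #{e ∈ Fe : t ∈ e} ≤ 2 |Fe|`. -/
lemma sum_incident_le {α : Type*} [DecidableEq α] (Fe : Finset (Sym2 α)) (X : Finset α) :
    ∑ t ∈ X, (Fe.filter (fun e => t ∈ e)).card ≤ 2 * Fe.card := by
  rw [sum_card_filter_comm' X Fe (fun t e => t ∈ e)]
  calc ∑ e ∈ Fe, (X.filter (fun t => t ∈ e)).card ≤ Fe.card • 2 :=
        Finset.sum_le_card_nsmul _ _ _ (fun e _ => card_filter_mem_sym2_le_two' X e)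
    _ = 2 * Fe.card := by rw [smul_eq_mul, mul_comm]

/-- refined budget when every `t ∈ X` has a chosen edge whose other endpoint avoids `X`. -/
lemma sum_incident_add_card_le {α : Type*} [DecidableEq α] (Fe : Finset (Sym2 α))
    (X : Finset α) (g : α → α)
    (hg : ∀ t ∈ X, s(t, g t) ∈ Fe ∧ g t ∉ X) :
    (∑ t ∈ X, (Fe.filter (fun e => t ∈ e)).card) + X.card ≤ 2 * Fe.card ∧ X.card ≤ Fe.card := by
  classical
  set J : Finset (Sym2 α) := X.image (fun t => s(t, g t)) with hJ
  have hJsub : J ⊆ Fe := by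
    intro e he
    rcases Finset.mem_image.mp he with ⟨t, ht, rfl⟩
    exact (hg t ht).1
  have hinj : Set.InjOn (fun t => s(t, g t)) ↑X := by
    intro t ht t' ht' hee
    simp only at hee
    have htm : t ∈ s(t', g t') := hee ▸ Sym2.mem_mk_left t (g t)
    rcases Sym2.mem_iff.mp htm with h | h
    · exact h
    · exact absurd (h ▸ ht) (by exact_mod_cast (hg t' ht').2)
  have hJcard : J.card = X.card := Finset.card_image_of_injOn hinj
  have hXF : X.card ≤ Fe.card := hJcard ▸ Finset.card_le_card hJsub
  refine ⟨?_, hXF⟩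
  rw [sum_card_filter_comm' X Fe (fun t e => t ∈ e)]
  have hsplit : ∑ e ∈ Fe \ J, (X.filter (fun t => t ∈ e)).card
      + ∑ e ∈ J, (X.filter (fun t => t ∈ e)).card
      = ∑ e ∈ Fe, (X.filter (fun t => t ∈ e)).card := Finset.sum_sdiff hJsub
  have hJ1 : ∑ e ∈ J, (X.filter (fun t => t ∈ e)).card ≤ J.card • 1 := by
    refine Finset.sum_le_card_nsmul _ _ _ (fun e he => ?_)
    rcases Finset.mem_image.mp he with ⟨t, ht, rfl⟩
    have hsub : X.filter (fun v => v ∈ s(t, g t)) ⊆ {t} := by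
      intro v hv
      rcases Finset.mem_filter.mp hv with ⟨hvX, hv⟩
      rcases Sym2.mem_iff.mp hv with h | h
      · simp [h]
      · exact absurd (h ▸ hvX) (hg t ht).2
    exact (Finset.card_le_card hsub).trans (by simp)
  have hrest : ∑ e ∈ Fe \ J, (X.filter (fun t => t ∈ e)).card ≤ (Fe \ J).card • 2 :=
    Finset.sum_le_card_nsmul _ _ _ (fun e _ => card_filter_mem_sym2_le_two' X e)
  have hcards : (Fe \ J).card + J.card = Fe.card := Finset.card_sdiff_add_card_eq_card hJsub
  simp only [smul_eq_mul, mul_one] at hJ1 hrest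
  omega

lemma arith0 (c h f i a b w1 L1 e1I e1A e1B : ℕ) (hc1 : 1 ≤ c) (hh : 2*h+1 ≤ c+2)
    (hf : f ≤ h) (hG2 : w1*(c+2) = L1+e1I+e1A+e1B) (hw1 : 3+i ≤ w1)
    (hcapI : e1I ≤ (c+2)*i) (hcapA : e1A ≤ (c+2)*a) (hcapB : e1B ≤ (c+2)*b)
    (hL1 : L1 ≤ 2*f) (hab : a + b ≤ 2) : False := by
  have h1 : (c+2)*(3+i) ≤ (c+2)*w1 := Nat.mul_le_mul_left _ hw1
  have h2 : (c+2)*(a+b) ≤ (c+2)*2 := Nat.mul_le_mul_left _ hab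
  nlinarith [h1, h2]

lemma arith1 (c h f i w1 L1 e1I e1A e1B : ℕ) (hc1 : 1 ≤ c) (hf : f ≤ h)
    (hG2 : w1*(c+2) = L1+e1I+e1A+e1B) (hw1 : 3+i ≤ w1)
    (hcapI : e1I ≤ (c+2)*i) (he1A : e1A ≤ w1) (he1B : e1B ≤ w1)
    (hL1 : L1 ≤ 2*f) (hi2 : i + h + 2 ≤ c + 2) : False := by
  have h1 : c*(3+i) ≤ c*w1 := Nat.mul_le_mul_left _ hw1
  nlinarith [h1]

lemma arith2 (c h f i m w1 L1 L0 e1I e0I e1A e1B : ℕ) (hc1 : 1 ≤ c) (hf : f ≤ h)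
    (hG2 : w1*(c+2) = L1+e1I+e1A+e1B) (he1A : e1A ≤ w1) (he1B : e1B ≤ w1)
    (hGb : m*(c+2+1) ≤ L0+e0I+m*m) (hcap : e1I+e0I ≤ (c+2)*i) (hsum : L1+L0 ≤ 2*f)
    (hw1m : 3+i ≤ w1+m) (hiub : i+h+1 ≤ c+2) (hm1 : 1 ≤ m) (hm2 : m ≤ 2) : False := by
  have h1 : c*(3+i) ≤ c*(w1+m) := Nat.mul_le_mul_left _ hw1m
  have hm12 : m = 1 ∨ m = 2 := by omega
  rcases hm12 with rfl | rfl <;> nlinarith [h1]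

lemma arith3 (c e i m L0 e0I f : ℕ) (hm3 : 3 ≤ m)
    (hGb : m*(c+2+1) ≤ L0 + e0I + m*m) (he0I : e0I ≤ m*i)
    (hbud : L0 + m ≤ 2*f) (hf : f ≤ m + e) (hiub : i + (m+e) + 1 ≤ c+2) : False := by
  have h1 : m*(i + (m+e) + 1) ≤ m*(c+2) := Nat.mul_le_mul_left _ hiub
  have h2 : 3*e ≤ m*e := Nat.mul_le_mul_right e hm3
  nlinarith [h1, h2]

lemma main_diag [Fintype V] [DecidableEq V] (G : SimpleGraph V) [DecidableRel G.Adj]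
    (k h : ℕ) (hk : 3 ≤ k) (hreg : ∀ v : V, G.degree v = k) (hconn : k ≤ vConn G)
    (hh : 2 * h + 1 ≤ k) (hV : 2 * (k - h) + 3 ≤ Fintype.card V)
    (Fe : Finset (Sym2 V)) (hFeE : ↑Fe ⊆ G.edgeSet) (hFec : Fe.card ≤ h)
    (F1 F2 : Finset V) (hne : F1 ≠ F2) (h1 : F1.card ≤ k - h) (h2 : F2.card ≤ k - h) :
    mmDistinguishable (G.deleteEdges ↑Fe) F1 F2 := by
  classical
  by_contra hnd
  set H := G.deleteEdges (↑Fe : Set (Sym2 V)) with hH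
  have hHadj : ∀ x y : V, H.Adj x y ↔ G.Adj x y ∧ s(x, y) ∉ Fe := by
    intro x y; rw [hH, SimpleGraph.deleteEdges_adj]; simp
  set I : Finset V := F1 ∩ F2 with hI
  set A : Finset V := F1 \ F2 with hA
  set B : Finset V := F2 \ F1 with hB
  set Sf : Finset V := F1 ∪ F2 with hSf
  set W : Finset V := Sfᶜ with hW
  set W1 : Finset V := W.filter (fun u => ∃ v ∈ A ∪ B, H.Adj u v) with hW1
  set W0 : Finset V := W \ W1 with hW0
  set P : Finset V := (A ∪ B) ∪ W1 with hP
  set T' : Finset V := W0.filter (fun t => ∃ x ∈ P, s(t, x) ∈ Fe) with hT'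
  -- membership basics
  have memW : ∀ x : V, x ∈ W ↔ (x ∉ F1 ∧ x ∉ F2) := by
    intro x; rw [hW, hSf]; simp [not_or]
  have memWSf : ∀ x : V, x ∈ W → x ∉ Sf := by
    intro x hx; rw [hSf]; have := (memW x).mp hx; simp [this.1, this.2]
  -- the three failing conditions
  have fact1 : ∀ u w v : V, u ∈ W → w ∈ W → v ∈ A ∪ B → H.Adj u v → H.Adj u w → False := by
    intro u w v hu hw hv h1' h2'
    refine hnd (Or.inl ⟨u, w, v, ?_, ?_, ?_, h1', h2'⟩)
    · have := (memW u).mp hu; simp [this.1, this.2]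
    · have := (memW w).mp hw; simp [this.1, this.2]
    · rw [hA, hB] at hv; exact hv
  have fact2 : ∀ a a' w : V, a ∈ A → a' ∈ A → a ≠ a' → w ∈ W → H.Adj w a → H.Adj w a' → False := by
    intro a a' w ha ha' hne' hw h1' h2'
    refine hnd (Or.inr (Or.inl ⟨a, a', w, ?_, ?_, hne', ?_, h1'.symm, h2'.symm⟩))
    · rw [hA] at ha; exact ha
    · rw [hA] at ha'; exact ha'
    · have := (memW w).mp hw; simp [this.1, this.2]
  have fact3 : ∀ a a' w : V, a ∈ B → a' ∈ B → a ≠ a' → w ∈ W → H.Adj w a → H.Adj w a' → False := by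
    intro a a' w ha ha' hne' hw h1' h2'
    refine hnd (Or.inr (Or.inr ⟨a, a', w, ?_, ?_, hne', ?_, h1'.symm, h2'.symm⟩))
    · rw [hB] at ha; exact ha
    · rw [hB] at ha'; exact ha'
    · have := (memW w).mp hw; simp [this.1, this.2]
  -- nonemptiness of A ∪ B
  have hAB : (A ∪ B).Nonempty := by
    rw [Finset.nonempty_iff_ne_empty]
    intro hemp
    rw [Finset.union_eq_empty] at hemp
    apply hne
    apply Finset.Subset.antisymm
    · rw [← Finset.sdiff_eq_empty_iff_subset, ← hA]; exact hemp.1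
    · rw [← Finset.sdiff_eq_empty_iff_subset, ← hB]; exact hemp.2
  -- cardinalities
  have hcardIA : I.card + A.card = F1.card := by
    rw [hI, hA]; exact Finset.card_inter_add_card_sdiff F1 F2
  have hcardIB : I.card + B.card = F2.card := by
    rw [hI, hB, Finset.inter_comm]; exact Finset.card_inter_add_card_sdiff F2 F1
  have hiub : I.card + h + 1 ≤ k := by
    rcases hAB with ⟨d, hd⟩
    rcases Finset.mem_union.mp hd with hdA | hdB
    · have : 1 ≤ A.card := Finset.card_pos.mpr ⟨d, hdA⟩
      omega
    · have : 1 ≤ B.card := Finset.card_pos.mpr ⟨d, hdB⟩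
      omega
  have hWcard : 3 + I.card ≤ W.card := by
    have hc1 : Sf.card + W.card = Fintype.card V := by
      rw [hW]; exact Finset.card_add_card_compl Sf
    have hc2 : Sf.card + I.card = F1.card + F2.card := by
      rw [hSf, hI]; exact Finset.card_union_add_card_inter F1 F2
    omega
  have hW1W0 : W0.card + W1.card = W.card := by
    rw [hW0]; exact Finset.card_sdiff_add_card_eq_card (Finset.filter_subset _ _)
  -- degrees
  set delv : V → ℕ := fun v => ((G.neighborFinset v).filter (fun w => s(v, w) ∈ Fe)).card
    with hdelv
  set nn : Finset V → V → ℕ := fun X v => (X.filter (fun y => H.Adj v y)).card with hnn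
  have hdeg : ∀ v : V, nn univ v + delv v = k := by
    intro v
    have hnbr : (univ : Finset V).filter (fun y => H.Adj v y)
        = (G.neighborFinset v).filter (fun w => ¬ s(v, w) ∈ Fe) := by
      ext w
      simp only [Finset.mem_filter, Finset.mem_univ, true_and, SimpleGraph.mem_neighborFinset,
        hHadj]
      try tauto
    have hsplit := Finset.card_filter_add_card_filter_not
      (s := G.neighborFinset v) (p := fun w => s(v, w) ∈ Fe)
    have hcard : (G.neighborFinset v).card = k := hreg v
    rw [hnn, hdelv]
    simp only [hnbr]
    omega
  have hdelv_le : ∀ v : V, delv v ≤ (Fe.filter (fun e => v ∈ e)).card := by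
    intro v
    rw [hdelv]
    apply Finset.card_le_card_of_injOn (fun w => s(v, w))
    · intro w hw
      rcases Finset.mem_filter.mp hw with ⟨-, hmem⟩
      exact Finset.mem_filter.mpr ⟨hmem, Sym2.mem_mk_left v w⟩
    · intro w1 _ w2 _ he
      exact Sym2.congr_right.mp he
  -- partition of the vertex set
  have hpart : ∀ y : V, y ∈ I ∨ y ∈ A ∨ y ∈ B ∨ y ∈ W1 ∨ y ∈ W0 := by
    intro y
    by_cases hy1 : y ∈ F1 <;> by_cases hy2 : y ∈ F2
    · exact Or.inl (by rw [hI]; exact Finset.mem_inter.mpr ⟨hy1, hy2⟩)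
    · exact Or.inr (Or.inl (by rw [hA]; exact Finset.mem_sdiff.mpr ⟨hy1, hy2⟩))
    · exact Or.inr (Or.inr (Or.inl (by rw [hB]; exact Finset.mem_sdiff.mpr ⟨hy2, hy1⟩)))
    · have hyW : y ∈ W := (memW y).mpr ⟨hy1, hy2⟩
      by_cases hyW1 : y ∈ W1
      · exact Or.inr (Or.inr (Or.inr (Or.inl hyW1)))
      · exact Or.inr (Or.inr (Or.inr (Or.inr (by
          rw [hW0]; exact Finset.mem_sdiff.mpr ⟨hyW, hyW1⟩))))
  have hdisjIA : Disjoint I A := by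
    rw [hI, hA]; exact Finset.disjoint_left.mpr (fun x hx hx' =>
      (Finset.mem_sdiff.mp hx').2 (Finset.mem_inter.mp hx).2)
  have hdisjIAB : Disjoint (I ∪ A) B := by
    rw [hI, hA, hB]
    refine Finset.disjoint_left.mpr (fun x hx hx' => ?_)
    rcases Finset.mem_union.mp hx with h | h
    · exact (Finset.mem_sdiff.mp hx').2 (Finset.mem_inter.mp h).1
    · exact (Finset.mem_sdiff.mp hx').2 (Finset.mem_sdiff.mp h).1
  have hdisjSW : Disjoint ((I ∪ A) ∪ B) W := by
    refine Finset.disjoint_left.mpr (fun x hx hx' => ?_)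
    have hx'' := (memW x).mp hx'
    rcases Finset.mem_union.mp hx with h | h
    · rcases Finset.mem_union.mp h with h' | h'
      · exact hx''.1 (Finset.mem_inter.mp (hI ▸ h')).1
      · exact hx''.1 (Finset.mem_sdiff.mp (hA ▸ h')).1
    · exact hx''.2 (Finset.mem_sdiff.mp (hB ▸ h)).1
  have hdisjW1W0 : Disjoint W1 W0 := by
    rw [hW0]; exact Finset.disjoint_sdiff
  have hunionW : W1 ∪ W0 = W := by
    rw [hW0]; exact Finset.union_sdiff_of_subset (Finset.filter_subset _ _)
  have huniv : ((I ∪ A) ∪ B) ∪ W = (univ : Finset V) := by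
    apply Finset.eq_univ_of_forall
    intro y
    rcases hpart y with hy | hy | hy | hy | hy
    · exact Finset.mem_union.mpr (Or.inl (Finset.mem_union.mpr (Or.inl (Finset.mem_union.mpr (Or.inl hy)))))
    · exact Finset.mem_union.mpr (Or.inl (Finset.mem_union.mpr (Or.inl (Finset.mem_union.mpr (Or.inr hy)))))
    · exact Finset.mem_union.mpr (Or.inl (Finset.mem_union.mpr (Or.inr hy)))
    · exact Finset.mem_union.mpr (Or.inr (hunionW ▸ Finset.mem_union.mpr (Or.inl hy)))
    · exact Finset.mem_union.mpr (Or.inr (hunionW ▸ Finset.mem_union.mpr (Or.inr hy)))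
  -- decomposition of filters over the partition
  have hnn_split : ∀ u : V, nn univ u = nn I u + nn A u + nn B u + nn W u := by
    intro u
    rw [hnn]
    simp only
    have hd1 : Disjoint (I.filter (fun y => H.Adj u y)) (A.filter (fun y => H.Adj u y)) :=
      Finset.disjoint_filter_filter hdisjIA
    have hd2 : Disjoint (I.filter (fun y => H.Adj u y) ∪ A.filter (fun y => H.Adj u y))
        (B.filter (fun y => H.Adj u y)) := by
      have := Finset.disjoint_filter_filter (p := fun y => H.Adj u y) (q := fun y => H.Adj u y) hdisjIAB
      rwa [Finset.filter_union] at this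
    have hd3 : Disjoint ((I.filter (fun y => H.Adj u y) ∪ A.filter (fun y => H.Adj u y))
        ∪ B.filter (fun y => H.Adj u y)) (W.filter (fun y => H.Adj u y)) := by
      have := Finset.disjoint_filter_filter (p := fun y => H.Adj u y) (q := fun y => H.Adj u y) hdisjSW
      rwa [Finset.filter_union, Finset.filter_union] at this
    rw [← huniv, Finset.filter_union, Finset.filter_union, Finset.filter_union,
      Finset.card_union_of_disjoint hd3, Finset.card_union_of_disjoint hd2,
      Finset.card_union_of_disjoint hd1]
  have hnn_W : ∀ u : V, nn W u = nn W1 u + nn W0 u := by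
    intro u
    rw [hnn]
    simp only
    rw [← hunionW, Finset.filter_union,
      Finset.card_union_of_disjoint (Finset.disjoint_filter_filter hdisjW1W0)]
  -- W1 vertices: no H-neighbors in W, at most one in A, at most one in B
  have hW1W : ∀ u ∈ W1, nn W u = 0 := by
    intro u hu
    have hu' := hu; rw [hW1] at hu'
    rcases Finset.mem_filter.mp hu' with ⟨huW, v, hv, huv⟩
    rw [hnn]; simp only [Finset.card_eq_zero, Finset.filter_eq_empty_iff]
    intro w hw hadj
    exact fact1 u w v huW hw hv huv hadj
  have hW1A : ∀ u ∈ W1, nn A u ≤ 1 := by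
    intro u hu
    have hu' := hu; rw [hW1] at hu'
    have huW := (Finset.mem_filter.mp hu').1
    rw [hnn]
    refine Finset.card_le_one.mpr ?_
    intro a ha b hb
    rcases Finset.mem_filter.mp ha with ⟨haA, hadja⟩
    rcases Finset.mem_filter.mp hb with ⟨hbA, hadjb⟩
    by_contra hab
    exact fact2 a b u haA hbA hab huW hadja hadjb
  have hW1B : ∀ u ∈ W1, nn B u ≤ 1 := by
    intro u hu
    have hu' := hu; rw [hW1] at hu'
    have huW := (Finset.mem_filter.mp hu').1
    rw [hnn]
    refine Finset.card_le_one.mpr ?_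
    intro a ha b hb
    rcases Finset.mem_filter.mp ha with ⟨haA, hadja⟩
    rcases Finset.mem_filter.mp hb with ⟨hbA, hadjb⟩
    by_contra hab
    exact fact3 a b u haA hbA hab huW hadja hadjb
  -- W0 vertices: neighbors only in I and W0
  have hW0W : W0 ⊆ W := hW0 ▸ Finset.sdiff_subset
  have hW0A : ∀ t ∈ W0, nn A t = 0 := by
    intro t ht
    have htW1 : t ∉ W1 := (Finset.mem_sdiff.mp (hW0 ▸ ht)).2
    have htW : t ∈ W := hW0W ht
    rw [hnn]; simp only [Finset.card_eq_zero, Finset.filter_eq_empty_iff]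
    intro y hy hadj
    exact htW1 (by
      rw [hW1]
      exact Finset.mem_filter.mpr ⟨htW, ⟨y, Finset.mem_union.mpr (Or.inl hy), hadj⟩⟩)
  have hW0B : ∀ t ∈ W0, nn B t = 0 := by
    intro t ht
    have htW1 : t ∉ W1 := (Finset.mem_sdiff.mp (hW0 ▸ ht)).2
    have htW : t ∈ W := hW0W ht
    rw [hnn]; simp only [Finset.card_eq_zero, Finset.filter_eq_empty_iff]
    intro y hy hadj
    exact htW1 (by
      rw [hW1]
      exact Finset.mem_filter.mpr ⟨htW, ⟨y, Finset.mem_union.mpr (Or.inr hy), hadj⟩⟩)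
  have hW0W1 : ∀ t ∈ W0, nn W1 t = 0 := by
    intro t ht
    have htW : t ∈ W := hW0W ht
    rw [hnn]; simp only [Finset.card_eq_zero, Finset.filter_eq_empty_iff]
    intro u hu hadj
    have hu' := hu; rw [hW1] at hu'
    rcases Finset.mem_filter.mp hu' with ⟨huW, v, hv, huv⟩
    exact fact1 u t v huW htW hv huv hadj.symm
  have hW0self : ∀ t ∈ W0, nn W0 t + 1 ≤ W0.card := by
    intro t ht
    rw [hnn]
    have hsub : W0.filter (fun y => H.Adj t y) ⊆ W0.erase t := by
      intro y hy
      rcases Finset.mem_filter.mp hy with ⟨hyW0, hadj⟩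
      exact Finset.mem_erase.mpr ⟨fun hyt => H.loopless.irrefl t (hyt ▸ hadj), hyW0⟩
    calc (W0.filter (fun y => H.Adj t y)).card + 1 ≤ (W0.erase t).card + 1 :=
          Nat.add_le_add_right (Finset.card_le_card hsub) 1
      _ = W0.card := Finset.card_erase_add_one ht
  -- per-vertex degree identities
  have hW1eq : ∀ u ∈ W1, k = delv u + nn I u + nn A u + nn B u := by
    intro u hu
    have h0 := hdeg u
    rw [hnn_split u, hW1W u hu] at h0
    omega
  have hW0ineq : ∀ t ∈ W0, k + 1 ≤ delv t + nn I t + W0.card := by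
    intro t ht
    have h0 := hdeg t
    rw [hnn_split t, hnn_W t] at h0
    have ha' := hW0A t ht
    have hb' := hW0B t ht
    have hc' := hW0W1 t ht
    have hd' := hW0self t ht
    omega
  -- summed inequalities
  have hG2 : W1.card * k = (∑ u ∈ W1, delv u) + (∑ u ∈ W1, nn I u)
      + (∑ u ∈ W1, nn A u) + (∑ u ∈ W1, nn B u) := by
    have hcongr : ∑ u ∈ W1, k = ∑ u ∈ W1, (delv u + nn I u + nn A u + nn B u) :=
      Finset.sum_congr rfl (fun u hu => hW1eq u hu)
    rw [Finset.sum_const, smul_eq_mul] at hcongr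
    rw [hcongr]
    rw [Finset.sum_add_distrib, Finset.sum_add_distrib, Finset.sum_add_distrib]
  have hGb : W0.card * (k + 1) ≤ (∑ t ∈ W0, delv t) + (∑ t ∈ W0, nn I t)
      + W0.card * W0.card := by
    have hcongr : ∑ t ∈ W0, (k + 1) ≤ ∑ t ∈ W0, (delv t + nn I t + W0.card) :=
      Finset.sum_le_sum hW0ineq
    rw [Finset.sum_const, smul_eq_mul] at hcongr
    calc W0.card * (k + 1) ≤ ∑ t ∈ W0, (delv t + nn I t + W0.card) := hcongr
      _ = (∑ t ∈ W0, delv t) + (∑ t ∈ W0, nn I t) + W0.card * W0.card := by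
          rw [Finset.sum_add_distrib, Finset.sum_add_distrib, Finset.sum_const, smul_eq_mul]
  have he0I : (∑ t ∈ W0, nn I t) ≤ W0.card * I.card := by
    refine (Finset.sum_le_card_nsmul _ _ _ (fun t _ => ?_)).trans (by rw [smul_eq_mul])
    rw [hnn]
    exact Finset.card_le_card (Finset.filter_subset _ _)
  have he1A : (∑ u ∈ W1, nn A u) ≤ W1.card := by
    refine (Finset.sum_le_card_nsmul _ _ _ (fun u hu => hW1A u hu)).trans (by simp)
  have he1B : (∑ u ∈ W1, nn B u) ≤ W1.card := by
    refine (Finset.sum_le_card_nsmul _ _ _ (fun u hu => hW1B u hu)).trans (by simp)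
  have hdegy : ∀ y : V, (W.filter (fun x => H.Adj x y)).card ≤ k := by
    intro y
    have hsub : W.filter (fun x => H.Adj x y) ⊆ univ.filter (fun x => H.Adj y x) := by
      intro x hx
      exact Finset.mem_filter.mpr ⟨Finset.mem_univ x, ((Finset.mem_filter.mp hx).2).symm⟩
    have hle := Finset.card_le_card hsub
    have hdy := hdeg y
    rw [hnn] at hdy
    simp only at hdy
    omega
  have hcap : (∑ u ∈ W1, nn I u) + (∑ t ∈ W0, nn I t) ≤ k * I.card := by
    rw [hnn]
    simp only
    rw [sum_card_filter_comm W1 I (fun x y => H.Adj x y),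
        sum_card_filter_comm W0 I (fun x y => H.Adj x y),
        ← Finset.sum_add_distrib]
    have hper : ∀ y ∈ I, (W1.filter (fun x => H.Adj x y)).card
        + (W0.filter (fun x => H.Adj x y)).card ≤ k := by
      intro y _
      rw [← Finset.card_union_of_disjoint (Finset.disjoint_filter_filter hdisjW1W0),
        ← Finset.filter_union, hunionW]
      exact hdegy y
    exact (Finset.sum_le_card_nsmul _ _ _ hper).trans (by rw [smul_eq_mul, mul_comm])
  have hcapX : ∀ X : Finset V, (∑ u ∈ W1, nn X u) ≤ k * X.card := by
    intro X
    rw [hnn]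
    simp only
    rw [sum_card_filter_comm W1 X (fun x y => H.Adj x y)]
    have hper : ∀ y ∈ X, (W1.filter (fun x => H.Adj x y)).card ≤ k := by
      intro y _
      refine le_trans (Finset.card_le_card ?_) (hdegy y)
      intro x hx
      rcases Finset.mem_filter.mp hx with ⟨hxW1, hadj⟩
      exact Finset.mem_filter.mpr ⟨(hW1 ▸ Finset.filter_subset _ _) hxW1, hadj⟩
    exact (Finset.sum_le_card_nsmul _ _ _ hper).trans (by rw [smul_eq_mul, mul_comm])
  have hHsum : (∑ u ∈ W1, delv u) + (∑ t ∈ W0, delv t) ≤ 2 * Fe.card := by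
    rw [← Finset.sum_union hdisjW1W0]
    calc ∑ v ∈ W1 ∪ W0, delv v ≤ ∑ v ∈ W1 ∪ W0, (Fe.filter (fun e => v ∈ e)).card :=
        Finset.sum_le_sum (fun v _ => hdelv_le v)
      _ ≤ 2 * Fe.card := sum_incident_le Fe _
  -- choice of deleted edges out of T'
  have hch : ∀ t : V, ∃ x : V, t ∈ T' → (x ∈ P ∧ s(t, x) ∈ Fe) := by
    intro t
    by_cases ht : t ∈ T'
    · have ht' := ht; rw [hT'] at ht'
      rcases Finset.mem_filter.mp ht' with ⟨-, x, hx1, hx2⟩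
      exact ⟨x, fun _ => ⟨hx1, hx2⟩⟩
    · exact ⟨t, fun hh' => absurd hh' ht⟩
  choose gP hgP using hch
  have hPnW0 : ∀ z ∈ P, z ∉ W0 := by
    intro z hz hzW0
    rw [hP] at hz
    rcases Finset.mem_union.mp hz with hz | hz
    · have h' := (memW z).mp (hW0W hzW0)
      rcases Finset.mem_union.mp hz with h'' | h''
      · exact h'.1 (Finset.mem_sdiff.mp (hA ▸ h'')).1
      · exact h'.2 (Finset.mem_sdiff.mp (hB ▸ h'')).1
    · exact (Finset.mem_sdiff.mp (hW0 ▸ hzW0)).2 hz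
  have hT'W0 : T' ⊆ W0 := hT' ▸ Finset.filter_subset _ _
  have hT'f : T'.card ≤ Fe.card := by
    apply Finset.card_le_card_of_injOn (fun t => s(t, gP t))
    · intro t ht; exact (hgP t ht).2
    · intro t htc t' htc' hee
      simp only at hee
      have ht : t ∈ T' := Finset.mem_coe.mp htc
      have ht' : t' ∈ T' := Finset.mem_coe.mp htc'
      have htm : t ∈ s(t', gP t') := hee ▸ Sym2.mem_mk_left t (gP t)
      rcases Sym2.mem_iff.mp htm with hcase | hcase
      · exact hcase
      · exact absurd (hT'W0 ht) (hcase ▸ hPnW0 _ (hgP t' ht').1)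
  rcases (W0 \ T').eq_empty_or_nonempty with hsub | hqex
  · -- counting case : W0 ⊆ T'
    have hW0T' : W0 ⊆ T' := Finset.sdiff_eq_empty_iff_subset.mp hsub
    have hbud := sum_incident_add_card_le Fe W0 gP
      (fun t ht => ⟨(hgP t (hW0T' ht)).2, hPnW0 _ (hgP t (hW0T' ht)).1⟩)
    have hL0bud : (∑ t ∈ W0, delv t) + W0.card ≤ 2 * Fe.card := by
      have hmono : (∑ t ∈ W0, delv t) ≤ ∑ t ∈ W0, (Fe.filter (fun e => t ∈ e)).card :=
        Finset.sum_le_sum (fun t _ => hdelv_le t)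
      exact le_trans (Nat.add_le_add_right hmono _) hbud.1
    have hmf : W0.card ≤ Fe.card := hbud.2
    -- abbreviations for the sums
    set L1 := ∑ u ∈ W1, delv u with hL1'
    set L0 := ∑ t ∈ W0, delv t with hL0'
    set e1I := ∑ u ∈ W1, nn I u with he1I'
    set e0I := ∑ t ∈ W0, nn I t with he0I'
    set e1A := ∑ u ∈ W1, nn A u with he1A'
    set e1B := ∑ u ∈ W1, nn B u with he1B'
    obtain ⟨c, hc⟩ : ∃ c, k = c + 2 := ⟨k - 2, by omega⟩
    subst hc
    have hc1 : 1 ≤ c := by omega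
    rcases Nat.lt_or_ge W0.card 3 with hm3 | hm3
    · rcases Nat.eq_zero_or_pos W0.card with hm0 | hm1
      · -- m = 0
        have hW0emp : W0 = ∅ := Finset.card_eq_zero.mp hm0
        have hL0z : L0 = 0 := by rw [hL0', hW0emp]; simp
        have he0z : e0I = 0 := by rw [he0I', hW0emp]; simp
        have hw1ge : 3 + I.card ≤ W1.card := by omega
        have hcapA : e1A ≤ (c+2) * A.card := hcapX A
        have hcapB : e1B ≤ (c+2) * B.card := hcapX B
        have hcapI : e1I ≤ (c+2) * I.card := by linarith [hcap]
        have hL1f : L1 ≤ 2 * Fe.card := by linarith [hHsum]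
        have hab : 3 ≤ A.card + B.card := by
          by_contra hab
          push_neg at hab
          exact arith0 c h Fe.card I.card A.card B.card W1.card L1 e1I e1A e1B
            hc1 hh hFec hG2 hw1ge hcapI hcapA hcapB hL1f (by omega)
        have hi2 : I.card + h + 2 ≤ c + 2 := by
          rcases Nat.lt_or_ge A.card 2 with hA2 | hA2
          · omega
          · omega
        exact arith1 c h Fe.card I.card W1.card L1 e1I e1A e1B
          hc1 hFec hG2 hw1ge hcapI he1A he1B hL1f hi2
      · -- 1 ≤ m ≤ 2
        exact arith2 c h Fe.card I.card W0.card W1.card L1 L0 e1I e0I e1A e1B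
          hc1 hFec hG2 he1A he1B hGb hcap hHsum (by omega) hiub hm1 (by omega)
    · -- m ≥ 3
      obtain ⟨e, he⟩ := Nat.exists_eq_add_of_le (le_trans hmf hFec)
      subst he
      exact arith3 c e I.card W0.card L0 e0I Fe.card hm3 hGb he0I hL0bud hFec hiub
  · -- cut case
    obtain ⟨q, hq⟩ := hqex
    obtain ⟨d, hd⟩ := hAB
    have hqW0 : q ∈ W0 := (Finset.mem_sdiff.mp hq).1
    have hqT' : q ∉ T' := (Finset.mem_sdiff.mp hq).2
    set C : Finset V := I ∪ T' with hC
    have hCcard : C.card ≤ I.card + T'.card := Finset.card_union_le _ _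
    have hdP : d ∈ P := by rw [hP]; exact Finset.mem_union.mpr (Or.inl hd)
    have hdnC : d ∉ C := by
      rw [hC]
      intro hdc
      rcases Finset.mem_union.mp hdc with h' | h'
      · rcases Finset.mem_union.mp hd with h'' | h''
        · exact (Finset.mem_sdiff.mp (hA ▸ h'')).2 (Finset.mem_inter.mp (hI ▸ h')).2
        · exact (Finset.mem_sdiff.mp (hB ▸ h'')).2 (Finset.mem_inter.mp (hI ▸ h')).1
      · have hdW := hW0W (hT'W0 h')
        have h''' := (memW d).mp hdW
        rcases Finset.mem_union.mp hd with h'' | h''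
        · exact h'''.1 (Finset.mem_sdiff.mp (hA ▸ h'')).1
        · exact h'''.2 (Finset.mem_sdiff.mp (hB ▸ h'')).1
    have hqnC : q ∉ C := by
      rw [hC]
      intro hqc
      rcases Finset.mem_union.mp hqc with h' | h'
      · exact ((memW q).mp (hW0W hqW0)).1 (Finset.mem_inter.mp (hI ▸ h')).1
      · exact hqT' h'
    have hqnP : q ∉ P := fun hqP' => hPnW0 q hqP' hqW0
    have hnc : ¬ (G.induce ((↑C : Set V)ᶜ)).Connected := by
      apply sep_not_connected G ((↑C : Set V)ᶜ) {x : V | x ∈ P} (p := d) (q := q)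
        (by simpa using hdnC) (by simpa using hqnC) hdP hqnP
      intro x y hx hy hxP hadj
      have hyC : y ∉ C := by simpa using hy
      have hxP' : x ∈ P := hxP
      simp only [Set.mem_setOf_eq]
      rcases hpart y with hy' | hy' | hy' | hy' | hy'
      · exact (hyC (by rw [hC]; exact Finset.mem_union.mpr (Or.inl hy'))).elim
      · rw [hP]; exact Finset.mem_union.mpr (Or.inl (Finset.mem_union.mpr (Or.inl hy')))
      · rw [hP]; exact Finset.mem_union.mpr (Or.inl (Finset.mem_union.mpr (Or.inr hy')))
      · rw [hP]; exact Finset.mem_union.mpr (Or.inr hy')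
      · by_cases hFed : s(x, y) ∈ Fe
        · have hyT' : y ∈ T' := by
            rw [hT']
            exact Finset.mem_filter.mpr ⟨hy', ⟨x, hxP', by rw [Sym2.eq_swap]; exact hFed⟩⟩
          exact (hyC (by rw [hC]; exact Finset.mem_union.mpr (Or.inr hyT'))).elim
        · have hHxy : H.Adj x y := (hHadj x y).mpr ⟨hadj, hFed⟩
          rw [hP] at hxP'
          rcases Finset.mem_union.mp hxP' with hx' | hx'
          · have hyW1 : y ∈ W1 := by
              rw [hW1]
              exact Finset.mem_filter.mpr ⟨hW0W hy', ⟨x, hx', hHxy.symm⟩⟩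
            exact ((Finset.mem_sdiff.mp (hW0 ▸ hy')).2 hyW1).elim
          · have hx'' := hx'; rw [hW1] at hx''
            rcases Finset.mem_filter.mp hx'' with ⟨hxW, v, hv, hxv⟩
            exact (fact1 x y v hxW (hW0W hy') hv hxv hHxy).elim
    have hvc : vConn G ≤ C.card := Nat.sInf_le ⟨C, rfl, Or.inr hnc⟩
    omega

/-- A $k$-regular $k$-connected graph $G$ with $|V| ≥ 2(k-h)+3$, $k ≥ 3$, has
$t_h^e(G) = k - h$ under the MM* model for $0 ≤ h ≤ ⌊(k-1)/2⌋$. -/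
theorem mm_regular_connected [Fintype V] [DecidableEq V] (G : SimpleGraph V)
    [DecidableRel G.Adj] (k h : ℕ) (hk : 3 ≤ k) (hreg : ∀ v : V, G.degree v = k)
    (hconn : k ≤ vConn G) (hh : h ≤ (k - 1) / 2)
    (hV : 2 * (k - h) + 3 ≤ Fintype.card V) :
    mmTolDiag G h = k - h := by
  classical
  have hh' : 2 * h + 1 ≤ k := by omega
  have hSet : {s | ∀ Fe : Finset (Sym2 V), ↑Fe ⊆ G.edgeSet → Fe.card ≤ h →
      mmDiagnosable (G.deleteEdges ↑Fe) s} = Set.Iic (k - h) := by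
    ext s
    simp only [Set.mem_setOf_eq, Set.mem_Iic]
    constructor
    · intro hs
      by_contra hlt
      push_neg at hlt
      have hneV : Nonempty V := Fintype.card_pos_iff.mp (by omega)
      obtain ⟨v0⟩ := hneV
      have hdeg0 : (G.incidenceFinset v0).card = k := by
        rw [SimpleGraph.card_incidenceFinset_eq_degree]; exact hreg v0
      obtain ⟨Fe, hFesub, hFecard⟩ :=
        Finset.exists_subset_card_eq (show h ≤ (G.incidenceFinset v0).card by omega)
      have hFeE : ↑Fe ⊆ G.edgeSet := by
        intro e he
        have hmem := hFesub he
        rw [SimpleGraph.mem_incidenceFinset] at hmem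
        exact hmem.1
      set H := G.deleteEdges (↑Fe : Set (Sym2 V)) with hH
      have hHadj : ∀ x y : V, H.Adj x y ↔ G.Adj x y ∧ s(x, y) ∉ Fe := by
        intro x y; rw [hH, SimpleGraph.deleteEdges_adj]; simp
      set F1 : Finset V := (G.neighborFinset v0).filter (fun w => s(v0, w) ∉ Fe) with hF1
      set F2 : Finset V := insert v0 F1 with hF2
      have hv0nF1 : v0 ∉ F1 := by
        rw [hF1]
        intro hmem
        exact G.loopless.irrefl v0 ((SimpleGraph.mem_neighborFinset _ _ _).mp (Finset.mem_filter.mp hmem).1)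
      have hdel : ((G.neighborFinset v0).filter (fun w => s(v0, w) ∈ Fe)).card = h := by
        rw [← hFecard]
        apply Finset.card_bij (fun w _ => s(v0, w))
        · intro w hw; exact (Finset.mem_filter.mp hw).2
        · intro w hw w' hw' hee; exact Sym2.congr_right.mp hee
        · intro e he
          have hinc := hFesub he
          rw [SimpleGraph.mem_incidenceFinset] at hinc
          obtain ⟨hedge, hv0e⟩ := hinc
          refine ⟨Sym2.Mem.other' hv0e, ?_, (Sym2.other_spec' hv0e)⟩
          have hadj : G.Adj v0 (Sym2.Mem.other' hv0e) := by
            rw [← SimpleGraph.mem_edgeSet, Sym2.other_spec' hv0e]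
            exact hedge
          refine Finset.mem_filter.mpr ⟨(SimpleGraph.mem_neighborFinset _ _ _).mpr hadj, ?_⟩
          rw [Sym2.other_spec' hv0e]
          exact he
      have hF1card : F1.card = k - h := by
        have hsplit := Finset.card_filter_add_card_filter_not
          (s := G.neighborFinset v0) (p := fun w => s(v0, w) ∈ Fe)
        have hcardn : (G.neighborFinset v0).card = k := hreg v0
        rw [hF1]
        omega
      have hdiag := hs Fe hFeE (le_of_eq hFecard)
      have hne12 : F1 ≠ F2 := by
        intro heq
        exact hv0nF1 (heq ▸ Finset.mem_insert_self v0 F1)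
      have hF2card : F2.card = k - h + 1 := by
        rw [hF2, Finset.card_insert_of_notMem hv0nF1, hF1card]
      have hdist := hdiag F1 F2 hne12 (by omega) (by omega)
      have hF1sub : F1 ⊆ F2 := hF2 ▸ Finset.subset_insert v0 F1
      have hsd1 : F1 \ F2 = ∅ := Finset.sdiff_eq_empty_iff_subset.mpr hF1sub
      have hsd2 : F2 \ F1 ⊆ {v0} := by
        intro x hx
        rcases Finset.mem_sdiff.mp hx with ⟨hx2, hx1⟩
        rw [hF2] at hx2
        rcases Finset.mem_insert.mp hx2 with hx0 | hx1'
        · exact Finset.mem_singleton.mpr hx0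
        · exact absurd hx1' hx1
      rcases hdist with ⟨u, w, v, hu, hw, hv, huv, huw⟩ |
        ⟨u, v, w, hu, hv, huvne, hw, _, _⟩ | ⟨u, v, w, hu, hv, huvne, hw, _, _⟩
      · have hvv0 : v = v0 := by
          rcases Finset.mem_union.mp hv with hv' | hv'
          · rw [hsd1] at hv'; exact absurd hv' (Finset.notMem_empty v)
          · exact Finset.mem_singleton.mp (hsd2 hv')
        rw [hvv0] at huv
        have hadj' : G.Adj v0 u ∧ s(v0, u) ∉ Fe := (hHadj v0 u).mp huv.symm
        have huF1 : u ∈ F1 := by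
          rw [hF1]
          exact Finset.mem_filter.mpr ⟨(SimpleGraph.mem_neighborFinset _ _ _).mpr hadj'.1, hadj'.2⟩
        exact hu (Finset.mem_union.mpr (Or.inl huF1))
      · rw [hsd1] at hu; exact absurd hu (Finset.notMem_empty u)
      · have hu' : u = v0 := Finset.mem_singleton.mp (hsd2 hu)
        have hv' : v = v0 := Finset.mem_singleton.mp (hsd2 hv)
        exact huvne (hu'.trans hv'.symm)
    · intro hs Fe hFeE hFec F1 F2 hne h1 h2
      exact main_diag G k h hk hreg hconn hh' hV Fe hFeE hFec F1 F2 hne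
        (h1.trans hs) (h2.trans hs)
  unfold mmTolDiag
  rw [hSet, csSup_Iic]
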